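/- Let k \ge 15 and let H be a traceable graph of order at most 3k - 42 with a Hamiltonian path from a to b. Let K_k(H) be obtained from the disjoint union of the complete graph K_k and H by adding edges au and bv for two distinct vertices u, v of K_k. Then K_k(H) is traceable and \gamma_g(K_k(H)) \le \lceil n(K_k(H))/2 \rceil. -/

import Mathlib

open Finset
open scoped Classical

variable {V : Type*}

/-- The closed neighborhood `N[v]` of a vertex, as a finset. -/
noncomputable def closedNbhd [Fintype V] (G : SimpleGraph V) (v : V) : Finset V :=
  Finset.univ.filter (fun u => u = v ∨ G.Adj v u)

/-- The legal moves in the domination game when `D` is the set of dominated vertices: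
vertices whose closed neighborhood is not already dominated. -/
noncomputable def legalMoves [Fintype V] (G : SimpleGraph V) (D : Finset V) : Finset V :=
  Finset.univ.filter (fun v => ¬ closedNbhd G v ⊆ D)

lemma legalMoves_nonempty [Fintype V] (G : SimpleGraph V) {D : Finset V}
    (h : D ≠ Finset.univ) : (legalMoves G D).Nonempty := by
  obtain ⟨v, hv⟩ : ∃ v, v ∉ D := by
    by_contra hc
    push_neg at hc
    exact h (Finset.eq_univ_iff_forall.2 hc)
  refine ⟨v, ?_⟩
  simp only [legalMoves, Finset.mem_filter, Finset.mem_univ, true_and]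
  intro hsub
  exact hv (hsub (by simp [closedNbhd]))

lemma card_lt_of_legal [Fintype V] (G : SimpleGraph V) {D : Finset V} {v : V}
    (hv : v ∈ legalMoves G D) :
    (Finset.univ \ (D ∪ closedNbhd G v)).card < (Finset.univ \ D).card := by
  simp only [legalMoves, Finset.mem_filter, Finset.mem_univ, true_and] at hv
  obtain ⟨u, hu1, hu2⟩ := Finset.not_subset.1 hv
  apply Finset.card_lt_card
  constructor
  · exact Finset.sdiff_subset_sdiff (le_refl _) Finset.subset_union_left
  · intro hsub
    have := hsub (Finset.mem_sdiff.2 ⟨Finset.mem_univ u, hu2⟩)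
    simp only [Finset.mem_sdiff, Finset.mem_union] at this
    exact this.2 (Or.inr hu1)

/-- Optimal number of moves in the domination game on the partially dominated graph `G|D`;
`turn = true` means Dominator (the minimizer) moves next, `turn = false` means Staller
(the maximizer) moves next.  Every move must dominate a not-yet-dominated vertex and the
game ends when all vertices are dominated. -/
noncomputable def gameVal [Fintype V] (G : SimpleGraph V) : Bool → Finset V → ℕ
  | turn, D =>
    if h : D = Finset.univ then 0
    else
      have hne : (legalMoves G D).attach.Nonempty :=
        (Finset.attach_nonempty_iff).2 (legalMoves_nonempty G h)
      if turn then
        1 + (legalMoves G D).attach.inf' hne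
          (fun v => gameVal G false (D ∪ closedNbhd G v.1))
      else
        1 + (legalMoves G D).attach.sup' hne
          (fun v => gameVal G true (D ∪ closedNbhd G v.1))
  termination_by turn D => (Finset.univ \ D).card
  decreasing_by all_goals exact card_lt_of_legal G v.2

/-- The Dominator-start game domination number `γ_g(G|S)` of the partially dominated graph. -/
noncomputable def gammaG [Fintype V] (G : SimpleGraph V) (S : Finset V) : ℕ :=
  gameVal G true S

/-- The Staller-start game domination number `γ_g'(G|S)` of the partially dominated graph. -/
noncomputable def gammaG' [Fintype V] (G : SimpleGraph V) (S : Finset V) : ℕ :=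
  gameVal G false S

/-- Optimal number of (non-pass) moves in the Staller `p`-pass domination game on `G|D`:
the Dominator-start game in which Staller may additionally pass at most `p` times. -/
noncomputable def passVal [Fintype V] (G : SimpleGraph V) : Bool → ℕ → Finset V → ℕ
  | turn, p, D =>
    if h : D = Finset.univ then 0
    else
      have hne : (legalMoves G D).attach.Nonempty :=
        (Finset.attach_nonempty_iff).2 (legalMoves_nonempty G h)
      if turn then
        1 + (legalMoves G D).attach.inf' hne
          (fun v => passVal G false p (D ∪ closedNbhd G v.1))
      else
        match p with
        | 0 =>
          1 + (legalMoves G D).attach.sup' hne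
            (fun v => passVal G true 0 (D ∪ closedNbhd G v.1))
        | q + 1 =>
          max
            (1 + (legalMoves G D).attach.sup' hne
              (fun v => passVal G true (q + 1) (D ∪ closedNbhd G v.1)))
            (passVal G true q D)
  termination_by turn p D => ((Finset.univ \ D).card, p)
  decreasing_by
  · exact Prod.Lex.left _ _ (card_lt_of_legal G v.2)
  · exact Prod.Lex.left _ _ (card_lt_of_legal G v.2)
  · exact Prod.Lex.left _ _ (card_lt_of_legal G v.2)
  · exact Prod.Lex.right _ (Nat.lt_succ_self q)

/-- `γ_g^{St,p}(G)`: the Staller `p`-pass game domination number. -/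
noncomputable def gammaPass [Fintype V] (G : SimpleGraph V) (p : ℕ) : ℕ :=
  passVal G true p ∅

/-- Value (in `ℤ`) of the Dominator `1`-pass game on `G|D` in which the payoff is the
number of moves made minus the number of passes used by Dominator; Dominator minimizes,
Staller maximizes.  `turn = true` means it is Dominator's move, `pass = true` means the
pass is still available to Dominator. -/
noncomputable def domPassVal [Fintype V] (G : SimpleGraph V) : Bool → Bool → Finset V → ℤ
  | turn, pass, D =>
    if h : D = Finset.univ then 0
    else
      have hne : (legalMoves G D).attach.Nonempty :=
        (Finset.attach_nonempty_iff).2 (legalMoves_nonempty G h)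
      if turn then
        match pass with
        | false =>
          1 + (legalMoves G D).attach.inf' hne
            (fun v => domPassVal G false false (D ∪ closedNbhd G v.1))
        | true =>
          min
            (1 + (legalMoves G D).attach.inf' hne
              (fun v => domPassVal G false true (D ∪ closedNbhd G v.1)))
            (domPassVal G false false D - 1)
      else
        1 + (legalMoves G D).attach.sup' hne
          (fun v => domPassVal G true pass (D ∪ closedNbhd G v.1))
  termination_by turn pass D => ((Finset.univ \ D).card, pass.toNat)
  decreasing_by
  · exact Prod.Lex.left _ _ (card_lt_of_legal G v.2)
  · exact Prod.Lex.left _ _ (card_lt_of_legal G v.2)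
  · exact Prod.Lex.right _ (by norm_num)
  · exact Prod.Lex.left _ _ (card_lt_of_legal G v.2)

/-- A graph is a double-Staller graph if, in the Dominator `1`-pass game, Staller has a
strategy forcing at least `γ_g(G) + p` moves, where `p ∈ {0,1}` is the number of passes
used by Dominator.  Equivalently, the optimal value of "moves minus Dominator passes" in
that game is at least `γ_g(G)`. -/
def IsDoubleStaller [Fintype V] (G : SimpleGraph V) : Prop :=
  (gammaG G ∅ : ℤ) ≤ domPassVal G true true ∅

/-- An edge cut of `G`: a set of edges whose removal disconnects `G`. -/
def IsEdgeCut (G : SimpleGraph V) (C : Set (Sym2 V)) : Prop :=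
  C ⊆ G.edgeSet ∧ ¬ (G.deleteEdges C).Connected

/-- A minimal edge cut: no proper subset is an edge cut. -/
def IsMinimalEdgeCut (G : SimpleGraph V) (C : Set (Sym2 V)) : Prop :=
  IsEdgeCut G C ∧ ∀ C' ⊂ C, ¬ IsEdgeCut G C'

/-- A minimum edge cut: an edge cut of the smallest possible cardinality (this
cardinality is the edge-connectivity `κ'(G)`). -/
def IsMinimumEdgeCut (G : SimpleGraph V) (C : Set (Sym2 V)) : Prop :=
  IsEdgeCut G C ∧ ∀ C', IsEdgeCut G C' → C.ncard ≤ C'.ncard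

/-- A graph is traceable if it contains a Hamiltonian path. -/
def Traceable (G : SimpleGraph V) : Prop :=
  ∃ (a b : V) (p : G.Walk a b), p.IsHamiltonian
/-- The disjoint union of two graphs. -/
def sumGraph {V₁ V₂ : Type*} (G₁ : SimpleGraph V₁) (G₂ : SimpleGraph V₂) :
    SimpleGraph (V₁ ⊕ V₂) :=
  SimpleGraph.fromRel (fun a b =>
    match a, b with
    | Sum.inl u, Sum.inl w => G₁.Adj u w
    | Sum.inr u, Sum.inr w => G₂.Adj u w
    | _, _ => False)

/-- The graph `H_{x,3}`: two disjoint copies of `H` (the first copy on `Sum.inl ∘ Sum.inl`,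
the second on `Sum.inl ∘ Sum.inr`) joined by a path of length 3 from `x` to its copy `x'`
through the two internal vertices `y = Sum.inr 0` (adjacent to `x`) and
`y' = Sum.inr 1` (adjacent to `x'`). -/
def Hx3 (H : SimpleGraph V) (x : V) : SimpleGraph ((V ⊕ V) ⊕ Fin 2) :=
  SimpleGraph.fromRel (fun a b =>
    match a, b with
    | Sum.inl (Sum.inl u), Sum.inl (Sum.inl w) => H.Adj u w
    | Sum.inl (Sum.inr u), Sum.inl (Sum.inr w) => H.Adj u w
    | Sum.inl (Sum.inl u), Sum.inr i => u = x ∧ i = 0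
    | Sum.inl (Sum.inr u), Sum.inr i => u = x ∧ i = 1
    | Sum.inr i, Sum.inr j => i ≠ j
    | _, _ => False)

/-- The tree `T_n`: a star `K_{1,n}` with center `Sum.inl ()`, support vertices
`Sum.inr (Sum.inl i)`, and four leaves `Sum.inr (Sum.inr (i, l))` attached to each
support vertex. -/
def Tn (n : ℕ) : SimpleGraph (Unit ⊕ (Fin n ⊕ Fin n × Fin 4)) :=
  SimpleGraph.fromRel (fun a b =>
    match a, b with
    | Sum.inl _, Sum.inr (Sum.inl _) => True
    | Sum.inr (Sum.inl i), Sum.inr (Sum.inr jl) => i = jl.1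
    | _, _ => False)

/-- The graph `K_k(H)`: the disjoint union of the complete graph `K_k` (on `Fin k`,
embedded via `Sum.inl`) and the graph `H` (embedded via `Sum.inr`), together with the
two extra edges `au` and `bv`. -/
def KkH {W : Type*} (k : ℕ) (H : SimpleGraph W) (u v : Fin k) (a b : W) :
    SimpleGraph (Fin k ⊕ W) :=
  SimpleGraph.fromRel (fun s t =>
    match s, t with
    | Sum.inl i, Sum.inl j => i ≠ j
    | Sum.inr w₁, Sum.inr w₂ => H.Adj w₁ w₂
    | Sum.inl i, Sum.inr w => (i = u ∧ w = a) ∨ (i = v ∧ w = b)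
    | _, _ => False)


section Aux

open SimpleGraph

/-- Build a walk from a chain. -/
noncomputable def chainWalk (G : SimpleGraph V) :
    ∀ (x : V) (l : List V), List.Chain G.Adj x l → G.Walk x ((x :: l).getLast (by simp))
  | _, [], _ => SimpleGraph.Walk.nil
  | x, y :: l, h =>
    (SimpleGraph.Walk.cons (List.chain_cons.mp h).1
      (chainWalk G y l (List.chain_cons.mp h).2)).copy rfl
      (List.getLast_cons (by simp)).symm

lemma chainWalk_support (G : SimpleGraph V) :
    ∀ (x : V) (l : List V) (h : List.Chain G.Adj x l),
      (chainWalk G x l h).support = x :: l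
  | _, [], _ => rfl
  | x, y :: l, h => by
    rw [chainWalk]
    simp [chainWalk_support G y l (List.chain_cons.mp h).2]

lemma gameVal_univ [Fintype V] (G : SimpleGraph V) (t : Bool) :
    gameVal G t Finset.univ = 0 := by
  rw [gameVal]
  simp

lemma game_le [Fintype V] (G : SimpleGraph V) :
    ∀ n (D F : Finset V), (Finset.univ \ D).card ≤ n →
      (∀ x, x ∈ D ∨ ∃ f ∈ F, x ∈ closedNbhd G f) →
      gameVal G true D ≤ 2 * F.card ∧ gameVal G false D ≤ 2 * F.card + 1 := by
  intro n
  induction n with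
  | zero =>
    intro D F hcard hcover
    have hD : D = Finset.univ := by
      have h0 : Finset.univ \ D = ∅ := Finset.card_eq_zero.mp (Nat.le_zero.mp hcard)
      have := Finset.sdiff_eq_empty_iff_subset.mp h0
      exact Finset.eq_univ_iff_forall.mpr fun x => this (Finset.mem_univ x)
    subst hD
    simp [gameVal_univ]
  | succ n ih =>
    intro D F hcard hcover
    by_cases hD : D = Finset.univ
    · subst hD; simp [gameVal_univ]
    · have hne : (legalMoves G D).attach.Nonempty :=
        (Finset.attach_nonempty_iff).2 (legalMoves_nonempty G hD)
      constructor
      · have hex : ∃ f ∈ F, ¬ closedNbhd G f ⊆ D := by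
          by_contra hc
          push_neg at hc
          apply hD
          apply Finset.eq_univ_iff_forall.mpr
          intro x
          rcases hcover x with h | ⟨f, hfF, hxf⟩
          · exact h
          · exact hc f hfF hxf
        obtain ⟨f, hfF, hf⟩ := hex
        have hleg : f ∈ legalMoves G D := by
          simp only [legalMoves, Finset.mem_filter, Finset.mem_univ, true_and]
          exact hf
        rw [gameVal]
        rw [dif_neg hD]
        simp only [if_true]
        have hFpos : 1 ≤ F.card := Finset.card_pos.mpr ⟨f, hfF⟩
        have hstep : (legalMoves G D).attach.inf' hne
            (fun v => gameVal G false (D ∪ closedNbhd G v.1)) ≤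
            gameVal G false (D ∪ closedNbhd G f) :=
          Finset.inf'_le _ (Finset.mem_attach _ ⟨f, hleg⟩)
        have hcard' : (Finset.univ \ (D ∪ closedNbhd G f)).card ≤ n := by
          have := card_lt_of_legal G hleg
          omega
        have hcover' : ∀ x, x ∈ D ∪ closedNbhd G f ∨
            ∃ g ∈ F.erase f, x ∈ closedNbhd G g := by
          intro x
          rcases hcover x with h | ⟨g, hgF, hxg⟩
          · exact Or.inl (Finset.mem_union_left _ h)
          · by_cases hgf : g = f
            · exact Or.inl (Finset.mem_union_right _ (hgf ▸ hxg))
            · exact Or.inr ⟨g, Finset.mem_erase.mpr ⟨hgf, hgF⟩, hxg⟩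
        have := (ih (D ∪ closedNbhd G f) (F.erase f) hcard' hcover').2
        have hec : (F.erase f).card = F.card - 1 := Finset.card_erase_of_mem hfF
        omega
      · rw [gameVal]
        rw [dif_neg hD]
        simp only [Bool.false_eq_true, if_false]
        have hsup : (legalMoves G D).attach.sup' hne
            (fun v => gameVal G true (D ∪ closedNbhd G v.1)) ≤ 2 * F.card := by
          apply Finset.sup'_le
          rintro ⟨w, hw⟩ -
          have hcard' : (Finset.univ \ (D ∪ closedNbhd G w)).card ≤ n := by
            have := card_lt_of_legal G hw
            omega
          have hcover' : ∀ x, x ∈ D ∪ closedNbhd G w ∨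
              ∃ f ∈ F, x ∈ closedNbhd G f := by
            intro x
            rcases hcover x with h | h
            · exact Or.inl (Finset.mem_union_left _ h)
            · exact Or.inr h
          exact (ih _ F hcard' hcover').1
        omega

variable {W : Type*}

lemma KkH_adj_inl_inl (k : ℕ) (H : SimpleGraph W) (u v : Fin k) (a b : W)
    {i j : Fin k} (h : i ≠ j) :
    (KkH k H u v a b).Adj (Sum.inl i) (Sum.inl j) := by
  simp only [KkH, SimpleGraph.fromRel_adj]
  exact ⟨by simp [h], Or.inl h⟩

lemma KkH_adj_inr_inr (k : ℕ) (H : SimpleGraph W) (u v : Fin k) (a b : W)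
    {w₁ w₂ : W} (h : H.Adj w₁ w₂) :
    (KkH k H u v a b).Adj (Sum.inr w₁) (Sum.inr w₂) := by
  simp only [KkH, SimpleGraph.fromRel_adj]
  exact ⟨by simp [h.ne], Or.inl h⟩

lemma KkH_adj_u_a (k : ℕ) (H : SimpleGraph W) (u v : Fin k) (a b : W) :
    (KkH k H u v a b).Adj (Sum.inl u) (Sum.inr a) := by
  simp only [KkH, SimpleGraph.fromRel_adj]
  exact ⟨by simp, Or.inl (by simp)⟩

end Aux
set_option maxHeartbeats 1000000 in
/-- For `k ≥ 15` and a traceable graph `H` of order at most `3k - 42` with a Hamiltonian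
path from `a` to `b`, the graph `K_k(H)` (obtained from the disjoint union of `K_k` and
`H` by adding the edges `au` and `bv` for distinct `u, v` in `K_k`) is traceable and
satisfies `γ_g(K_k(H)) ≤ ⌈n(K_k(H))/2⌉`. -/
theorem stmt13 {W : Type*} [Fintype W] (k : ℕ) (hk : 15 ≤ k)
    (H : SimpleGraph W) (a b : W) (p : H.Walk a b) (hp : p.IsHamiltonian)
    (hW : Fintype.card W ≤ 3 * k - 42) (u v : Fin k) (huv : u ≠ v) :
    Traceable (KkH k H u v a b) ∧
    gammaG (KkH k H u v a b) ∅ ≤ (Fintype.card (Fin k ⊕ W) + 1) / 2 := by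
  classical
  set G := KkH k H u v a b with hGdef
  set l := p.support with hl
  have hll : p.support.length = l.length := rfl
  have hmem : ∀ w : W, w ∈ l := fun w => hp.mem_support w
  have hnd : l.Nodup := hp.isPath.support_nodup
  have hlen : l.length = Fintype.card W := by
    have h1 : l.toFinset = Finset.univ :=
      Finset.eq_univ_iff_forall.mpr (fun w => List.mem_toFinset.mpr (hmem w))
    have h2 := List.toFinset_card_of_nodup hnd
    rw [h1, Finset.card_univ] at h2
    omega
  let emb : H →g G := ⟨Sum.inr, fun h => KkH_adj_inr_inr k H u v a b h⟩
  set L : List (Fin k) := (Finset.univ.erase u).toList ++ [u] with hLdef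
  have hLnd : L.Nodup := by
    rw [hLdef, List.nodup_append]
    refine ⟨Finset.nodup_toList _, List.nodup_singleton u, ?_⟩
    intro x hx y hx' hxy
    simp only [List.mem_singleton] at hx'
    subst hx' hxy
    simp at hx
  have hLmem : ∀ j : Fin k, j ∈ L := by
    intro j
    rw [hLdef, List.mem_append]
    by_cases hj : j = u
    · exact Or.inr (by simp [hj])
    · exact Or.inl (by simp [Finset.mem_toList, hj])
  set Lm : List (Fin k ⊕ W) := L.map Sum.inl with hLmdef
  have hchain : Lm.Chain' G.Adj := by
    rw [hLmdef]
    show List.IsChain G.Adj (List.map Sum.inl L)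
    rw [List.isChain_map]
    exact List.Pairwise.isChain (hLnd.imp (fun h => KkH_adj_inl_inl k H u v a b h))
  have hLmne : Lm ≠ [] := by
    simp [hLmdef, hLdef]
  obtain ⟨x, t, hxt⟩ := List.exists_cons_of_ne_nil hLmne
  have hch : List.Chain G.Adj x t := by
    have h := hxt ▸ hchain
    exact h
  have hlast : (x :: t).getLast (by simp) = Sum.inl u := by
    have h1 : (x :: t).getLast? = some (Sum.inl u) := by
      rw [← hxt, hLmdef, hLdef, List.map_append]
      simpa using List.getLast?_concat (L := (Finset.univ.erase u).toList.map Sum.inl)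
    rw [List.getLast?_eq_getLast (by simp)] at h1
    exact Option.some_injective _ h1
  let w1 : G.Walk x (Sum.inl u) := (chainWalk G x t hch).copy rfl hlast
  let w2 : G.Walk (Sum.inl u) (Sum.inr b) :=
    SimpleGraph.Walk.cons (KkH_adj_u_a k H u v a b) (p.map emb)
  let w := w1.append w2
  have hsupp : w.support = Lm ++ l.map Sum.inr := by
    show (w1.append w2).support = _
    rw [SimpleGraph.Walk.support_append]
    have h1 : w1.support = x :: t := by
      show ((chainWalk G x t hch).copy rfl hlast).support = _
      rw [SimpleGraph.Walk.support_copy, chainWalk_support]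
    have h2 : w2.support.tail = l.map Sum.inr := by
      show (SimpleGraph.Walk.cons _ (p.map emb)).support.tail = _
      rw [SimpleGraph.Walk.support_cons]
      simp only [List.tail_cons]
      rw [SimpleGraph.Walk.support_map]
      rfl
    rw [h1, h2, ← hxt]
  have hnds : w.support.Nodup := by
    rw [hsupp, List.nodup_append]
    refine ⟨hLmdef ▸ hLnd.map Sum.inl_injective, hnd.map Sum.inr_injective, ?_⟩
    intro c hc d hc' hcd
    rw [hLmdef] at hc
    obtain ⟨j, -, rfl⟩ := List.mem_map.mp hc
    obtain ⟨w', -, h⟩ := List.mem_map.mp hc'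
    subst h
    exact Sum.inl_ne_inr hcd
  refine ⟨⟨x, Sum.inr b, w, ?_⟩, ?_⟩
  · have hh : ∀ c, c ∈ w.support := by
      intro c
      rw [hsupp]
      rcases c with j | w'
      · refine List.mem_append.mpr (Or.inl ?_)
        rw [hLmdef]
        exact List.mem_map_of_mem (hLmem j)
      · exact List.mem_append.mpr (Or.inr (List.mem_map_of_mem (hmem w')))
    have hham := SimpleGraph.Walk.IsPath.isHamiltonian_of_mem
      (SimpleGraph.Walk.IsPath.mk' hnds) hh
    convert hham using 2
  -- the domination game bound
  set S : Finset W :=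
    insert b (((Finset.range l.length).filter (fun i => i % 3 = 1)).image
      (fun i => l.getD i b)) with hSdef
  set F : Finset (Fin k ⊕ W) := insert (Sum.inl u) (S.image Sum.inr) with hFdef
  have hSget : ∀ i, i < l.length → i % 3 = 1 → l.getD i b ∈ S := by
    intro i h1 h2
    rw [hSdef]
    exact Finset.mem_insert_of_mem (Finset.mem_image.mpr
      ⟨i, Finset.mem_filter.mpr ⟨Finset.mem_range.mpr h1, h2⟩, rfl⟩)
  have hadj : ∀ i, i + 1 < l.length → H.Adj (l.getD i b) (l.getD (i+1) b) := by
    intro i hi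
    have hc := p.isChain_adj_support
    rw [List.isChain_iff_getElem] at hc
    have h := hc i (by omega)
    rw [List.getD_eq_getElem _ _ (by omega), List.getD_eq_getElem _ _ hi]
    simpa [List.get_eq_getElem] using h
  have hfil : ((Finset.range l.length).filter (fun i => i % 3 = 1)).card
      ≤ (l.length + 1) / 3 := by
    calc ((Finset.range l.length).filter (fun i => i % 3 = 1)).card
        ≤ (Finset.range ((l.length + 1) / 3)).card := by
          apply Finset.card_le_card_of_injOn (fun i => i / 3)
          · intro i hi
            simp only [Finset.mem_coe, Finset.coe_filter, Finset.mem_filter, Finset.mem_range, Set.mem_setOf_eq] at hi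
            simp only [Finset.mem_coe, Finset.coe_range, Set.mem_Iio, Finset.mem_range]
            omega
          · intro i hi j hj hij
            simp only [Finset.coe_filter, Finset.mem_range, Set.mem_setOf_eq] at hi hj
            have hij' : i / 3 = j / 3 := hij
            omega
      _ = (l.length + 1) / 3 := Finset.card_range _
  have hS : S.card ≤ (l.length + 1) / 3 + 1 := by
    rw [hSdef]
    have h1 := Finset.card_insert_le b
      (((Finset.range l.length).filter (fun i => i % 3 = 1)).image (fun i => l.getD i b))
    have h2 := Finset.card_image_le
      (s := (Finset.range l.length).filter (fun i => i % 3 = 1)) (f := fun i => l.getD i b)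
    omega
  have hF : F.card ≤ S.card + 1 := by
    rw [hFdef]
    have h1 := Finset.card_insert_le (Sum.inl u : Fin k ⊕ W) (S.image Sum.inr)
    have h2 := Finset.card_image_le (s := S) (f := (Sum.inr : W → Fin k ⊕ W))
    omega
  have hgame : gameVal G true ∅ ≤ 2 * F.card := by
    refine (game_le G _ ∅ F le_rfl ?_).1
    intro c
    apply Or.inr
    rcases c with j | w'
    · refine ⟨Sum.inl u, hFdef ▸ Finset.mem_insert_self _ _, ?_⟩
      simp only [closedNbhd, Finset.mem_filter, Finset.mem_univ, true_and]
      by_cases hj : j = u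
      · subst hj; tauto
      · exact Or.inr (KkH_adj_inl_inl k H u v a b (fun h => hj h.symm))
    · obtain ⟨i, hi, hiw⟩ := List.getElem_of_mem (hmem w')
      have hgd : l.getD i b = w' := by rw [List.getD_eq_getElem _ _ hi, hiw]
      have h3 : i % 3 = 0 ∨ i % 3 = 1 ∨ i % 3 = 2 := by omega
      rcases h3 with h3 | h3 | h3
      · by_cases hi1 : i + 1 < l.length
        · refine ⟨Sum.inr (l.getD (i+1) b),
            hFdef ▸ Finset.mem_insert_of_mem (Finset.mem_image_of_mem _
              (hSget (i+1) hi1 (by omega))), ?_⟩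
          simp only [closedNbhd, Finset.mem_filter, Finset.mem_univ, true_and]
          exact Or.inr (KkH_adj_inr_inr k H u v a b (hgd ▸ (hadj i hi1).symm))
        · have hieq : i = l.length - 1 := by omega
          have hwb : w' = b := by
            have h4 := SimpleGraph.Walk.getLast_support p
            rw [List.getLast_eq_getElem] at h4
            rw [← hiw]
            rw [getElem_congr_idx hieq]
            exact h4
          refine ⟨Sum.inr b,
            hFdef ▸ Finset.mem_insert_of_mem (Finset.mem_image_of_mem _
              (hSdef ▸ Finset.mem_insert_self _ _)), ?_⟩
          simp only [closedNbhd, Finset.mem_filter, Finset.mem_univ, true_and]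
          subst hwb
          tauto
      · refine ⟨Sum.inr w',
          hFdef ▸ Finset.mem_insert_of_mem (Finset.mem_image_of_mem _
            (hgd ▸ hSget i hi h3)), ?_⟩
        simp only [closedNbhd, Finset.mem_filter, Finset.mem_univ, true_and]
        tauto
      · have hi1 : i - 1 + 1 = i := by omega
        refine ⟨Sum.inr (l.getD (i-1) b),
          hFdef ▸ Finset.mem_insert_of_mem (Finset.mem_image_of_mem _
            (hSget (i-1) (by omega) (by omega))), ?_⟩
        simp only [closedNbhd, Finset.mem_filter, Finset.mem_univ, true_and]
        refine Or.inr (KkH_adj_inr_inr k H u v a b ?_)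
        have h5 := hadj (i-1) (by omega)
        rw [hi1] at h5
        exact hgd ▸ h5
  have hcardsum : Fintype.card (Fin k ⊕ W) = k + Fintype.card W := by simp
  have hgg : gammaG G ∅ = gameVal G true ∅ := rfl
  rw [hgg]
  omega
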